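/- Let ℓ ≥ 3. A right A-module homomorphism g : P_{ℓ−1} → k_ε satisfies g ∘ d_ℓ = 0 if and only if for every v ∈ V the following four families of identities hold: (1) g^{vᵀ}_{j,i} = −(−1)^ℓ g^{v^σ}_{σ(j),σ(i)} − δ_{j,n}δ_{i,n}( g^v_{1,1} + δ_{ℓ,3} Σ_{s=2}^{n−1} g^v_{s,s} ) for all (j,i) ∈ {1,…,n}² with (j,i) ≠ (1,1); (2) g^{v^δ}_{j,i} = −(−1)^ℓ g^v_{σ(j),σ(i)} − δ_{j,n}δ_{i,n}( g^{v^σ}_{1,1} + δ_{ℓ,3} Σ_{s=2}^{n−1} g^{v^σ}_{s,s} ) for all (j,i) ∈ {1,…,n}² with (j,i) ≠ (1,1); (3) g^{v^δ}_{1,1} = −(−1)^ℓ g^{vᵀ}_{1,1} − (−1)^ℓ g^v_{n,n} + δ_{ℓ,3} Σ_{s=2}^{n−1} g^{v^σ}_{s,s}; (4) g^{v^σ}_{n,n} = −δ_{ℓ,3} Σ_{s=2}^{n−1} g^{v^σ}_{s,s} + (−1)^ℓ ( g^v_{n,n} + δ_{ℓ,3} Σ_{s=2}^{n−1} g^v_{s,s}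 ). Moreover, if (1)–(4) hold for one particular v ∈ V, then they hold for every v ∈ V. -/

import Mathlib

/-!
Common setting (from the paper "The Anick resolution of the co-unit of the free unitary
quantum group", arXiv:2403.06663):

`k` is a field and `n ≥ 2`.  `S` is the set of `2n²` generators `u∘_{j,i}, u•_{j,i}`,
`(j,i) ∈ {1,…,n}²`, with the involution `*` exchanging `u∘_{j,i}` and `u•_{j,i}`.
Indices are realized `0`-based as elements of `Fin n` (so the index `1` is `fin1 = 0`,
the index `n` is `finN = n-1`, and `σ(i) = n-i+1` is `Fin.rev`).
-/

namespace UnPlusAnick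

/-- A generator: a color (`false` = white `∘`, `true` = black `•`) and a pair of indices. -/
abbrev Gen (n : ℕ) := Bool × Fin n × Fin n

/-- The involution `*` on the generators: it flips the color and keeps the indices. -/
def genStar {n : ℕ} (g : Gen n) : Gen n := (!g.1, g.2)

/-- An `n × n` matrix with entries in the set of generators. -/
abbrev Mat (n : ℕ) := Fin n → Fin n → Gen n

/-- The fundamental matrix `u`, `u_{j,i} = u∘_{j,i}`. -/
def uMat (n : ℕ) : Mat n := fun j i => (false, j, i)

/-- The transpose `vᵀ`. -/
def mT {n : ℕ} (v : Mat n) : Mat n := fun j i => v i j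

/-- The matrix `v^σ`, `(v^σ)_{j,i} = (v_{σ(j),σ(i)})^*`. -/
def mS {n : ℕ} (v : Mat n) : Mat n := fun j i => genStar (v j.rev i.rev)

/-- The matrix `v^δ`, `(v^δ)_{j,i} = (v_{σ(i),σ(j)})^*`; thus `v^δ = (v^σ)ᵀ`. -/
def mD {n : ℕ} (v : Mat n) : Mat n := fun j i => genStar (v i.rev j.rev)

/-- The set `V = {u, uᵀ, u^σ, u^δ}`. -/
def V (n : ℕ) : Set (Mat n) := {uMat n, mT (uMat n), mS (uMat n), mD (uMat n)}

/-- The index `1` of `{1, …, n}`, as the `0`-based element `0` of `Fin n`. -/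
def fin1 (n : ℕ) (hn : 2 ≤ n) : Fin n := ⟨0, by omega⟩

/-- The index `n` of `{1, …, n}`, as the `0`-based element `n - 1` of `Fin n`. -/
def finN (n : ℕ) (hn : 2 ≤ n) : Fin n := ⟨n - 1, by omega⟩

theorem genStar_genStar {n : ℕ} (g : Gen n) : genStar (genStar g) = g := by simp [genStar]

theorem mS_mS {n : ℕ} (v : Mat n) : mS (mS v) = v := by
  funext j i; simp [mS, genStar_genStar]

theorem mD_mD {n : ℕ} (v : Mat n) : mD (mD v) = v := by
  funext j i; simp [mD, genStar_genStar]

theorem mS_mD {n : ℕ} (v : Mat n) : mS (mD v) = mT v := by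
  funext j i; simp [mS, mD, mT, genStar_genStar]

theorem mD_mS {n : ℕ} (v : Mat n) : mD (mS v) = mT v := by
  funext j i; simp [mS, mD, mT, genStar_genStar]

/-- `V` is closed under transposition. -/
theorem V_mT {n : ℕ} {v : Mat n} (hv : v ∈ V n) : mT v ∈ V n := by
  simp only [V, Set.mem_insert_iff, Set.mem_singleton_iff] at hv ⊢
  rcases hv with rfl | rfl | rfl | rfl
  · exact Or.inr (Or.inl rfl)
  · exact Or.inl rfl
  · exact Or.inr (Or.inr (Or.inr rfl))
  · exact Or.inr (Or.inr (Or.inl rfl))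

/-- `V` is closed under `v ↦ v^σ`. -/
theorem V_mS {n : ℕ} {v : Mat n} (hv : v ∈ V n) : mS v ∈ V n := by
  simp only [V, Set.mem_insert_iff, Set.mem_singleton_iff] at hv ⊢
  rcases hv with rfl | rfl | rfl | rfl
  · exact Or.inr (Or.inr (Or.inl rfl))
  · exact Or.inr (Or.inr (Or.inr rfl))
  · exact Or.inl (mS_mS _)
  · exact Or.inr (Or.inl (mS_mD _))

/-- `V` is closed under `v ↦ v^δ`. -/
theorem V_mD {n : ℕ} {v : Mat n} (hv : v ∈ V n) : mD v ∈ V n := by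
  simp only [V, Set.mem_insert_iff, Set.mem_singleton_iff] at hv ⊢
  rcases hv with rfl | rfl | rfl | rfl
  · exact Or.inr (Or.inr (Or.inr rfl))
  · exact Or.inr (Or.inr (Or.inl rfl))
  · exact Or.inr (Or.inl (mD_mS _))
  · exact Or.inl (mD_mD _)

/-! ### Words and the free algebra -/

/-- Words in the generators: the free monoid over the set of generators. -/
abbrev Word (n : ℕ) := FreeMonoid (Gen n)

/-- The free unital associative `k`-algebra on the generators, realized as the monoid algebra
of the free monoid of words; its canonical `k`-basis is the set of words. -/
abbrev FreeAlg (k : Type*) [Field k] (n : ℕ) := MonoidAlgebra k (Word n)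

/-- A word, viewed as a monomial in the free algebra. -/
noncomputable def wd (k : Type*) [Field k] {n : ℕ} (w : Word n) : FreeAlg k n :=
  MonoidAlgebra.of k (Word n) w

/-- The relation `b^v_{j,i} = ∑_{s=1}^{n} v_{j,σ(s)} (v^δ)_{s,σ(i)} − δ_{j,i} · 1`. -/
noncomputable def brel (k : Type*) [Field k] {n : ℕ} (v : Mat n) (j i : Fin n) : FreeAlg k n :=
  (∑ s : Fin n, wd k (FreeMonoid.of (v j s.rev) * FreeMonoid.of (mD v s i.rev)))
    - if j = i then 1 else 0

/-- The set of relations `R = {b^v_{j,i} : v ∈ V, (j,i) ∈ {1,…,n}²}`. -/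
def rels (k : Type*) [Field k] (n : ℕ) : Set (FreeAlg k n) :=
  {x | ∃ v ∈ V n, ∃ j i : Fin n, x = brel k v j i}

/-- `b̃^v = v_{n,n}(v^δ)_{1,1} − ∑_{s=2}^{n} ∑_{t=1}^{n−1} v_{t,σ(s)}(v^δ)_{s,σ(t)} + (n−2)·1`. -/
noncomputable def btil (k : Type*) [Field k] (n : ℕ) (hn : 2 ≤ n) (v : Mat n) : FreeAlg k n :=
  wd k (FreeMonoid.of (v (finN n hn) (finN n hn)) * FreeMonoid.of (mD v (fin1 n hn) (fin1 n hn)))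
    - (∑ s ∈ Finset.univ.filter (fun s : Fin n => s ≠ fin1 n hn),
        ∑ t ∈ Finset.univ.filter (fun t : Fin n => t ≠ finN n hn),
          wd k (FreeMonoid.of (v t s.rev) * FreeMonoid.of (mD v s t.rev)))
    + ((n - 2 : ℕ) : FreeAlg k n)

/-! ### The monomial order and tips -/

/-- The strict order on the generators: every black generator is smaller than every white one;
`u•_{t,s} < u•_{j,i}` iff `(j,i) <` `(t,s)` lexicographically, and `u∘_{t,s} < u∘_{j,i}` iff
`(t,s) < (j,i)` lexicographically. -/
def genLT {n : ℕ} (g h : Gen n) : Prop :=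
  (g.1 = true ∧ h.1 = false) ∨
    (g.1 = true ∧ h.1 = true ∧ toLex h.2 < toLex g.2) ∨
    (g.1 = false ∧ h.1 = false ∧ toLex g.2 < toLex h.2)

/-- The degreewise lexicographic extension of the order on generators to words:
`w ≤ w'` iff `w = w'`, or `w` is shorter than `w'`, or they have the same length and `w`
precedes `w'` lexicographically letter by letter. -/
def wordLE {n : ℕ} (w w' : Word n) : Prop :=
  w = w' ∨ (FreeMonoid.toList w).length < (FreeMonoid.toList w').length ∨
    ((FreeMonoid.toList w).length = (FreeMonoid.toList w').length ∧
      List.Lex genLT (FreeMonoid.toList w) (FreeMonoid.toList w'))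

/-- `IsTip f t`: the word `t` is the `≤`-largest word occurring with nonzero coefficient in
`f`, i.e. `Tip(f) = t`. -/
def IsTip (k : Type*) [Field k] {n : ℕ} (f : FreeAlg k n) (t : Word n) : Prop :=
  f.coeff t ≠ 0 ∧ ∀ w : Word n, f.coeff w ≠ 0 → wordLE w t

/-- `w` divides `w'` (as words in the free monoid). -/
def WDvd {n : ℕ} (w w' : Word n) : Prop := ∃ w₁ w₂ : Word n, w' = w₁ * w * w₂

/-! ### The ideal of relations -/

/-- The two-sided ideal `I` of the free algebra generated by the set of relations `R`. -/
noncomputable def idl (k : Type*) [Field k] (n : ℕ) : TwoSidedIdeal (FreeAlg k n) :=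
  TwoSidedIdeal.span (rels k n)

/-- The set `Tip(I)` of tips of nonzero elements of `I`. -/
def TipSet (k : Type*) [Field k] (n : ℕ) : Set (Word n) :=
  {w | ∃ f : FreeAlg k n, f ∈ idl k n ∧ f ≠ 0 ∧ IsTip k f w}

/-! ### Reductions and ambiguities -/

/-- `φ` is a one-step reduction by `f`: there are fixed words `w₁`, `w₂` such that `φ` maps the
word `w₁ Tip(f) w₂` to `w₁ (Tip(f) − c⁻¹ f) w₂`, where `c` is the leading coefficient of `f`,
and fixes every other word. -/
def IsOneStep (k : Type*) [Field k] {n : ℕ} (f : FreeAlg k n)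
    (φ : FreeAlg k n →ₗ[k] FreeAlg k n) : Prop :=
  f ≠ 0 ∧ ∃ (w₁ w₂ t : Word n), IsTip k f t ∧
    φ (wd k (w₁ * t * w₂)) = wd k w₁ * (wd k t - (f.coeff t)⁻¹ • f) * wd k w₂ ∧
    ∀ w : Word n, w ≠ w₁ * t * w₂ → φ (wd k w) = wd k w

/-- A reduction by a set `G`: a finite composition of one-step reductions by nonzero elements
of `G`. -/
inductive IsReduction (k : Type*) [Field k] {n : ℕ} (G : Set (FreeAlg k n)) :
    (FreeAlg k n →ₗ[k] FreeAlg k n) → Prop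
  | id : IsReduction k G LinearMap.id
  | comp {φ ψ : FreeAlg k n →ₗ[k] FreeAlg k n} {g : FreeAlg k n} (hg : g ∈ G)
      (hφ : IsOneStep k g φ) (hψ : IsReduction k G ψ) : IsReduction k G (φ ∘ₗ ψ)

/-- `(g, g', w₁, w₂)` is an inclusion ambiguity of `G`. -/
def IsInclusionAmbiguity (k : Type*) [Field k] {n : ℕ} (G : Set (FreeAlg k n))
    (g g' : FreeAlg k n) (w₁ w₂ : Word n) : Prop :=
  g ∈ G ∧ g' ∈ G ∧ g ≠ 0 ∧ g' ≠ 0 ∧ g ≠ g' ∧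
    ∃ t t' : Word n, IsTip k g t ∧ IsTip k g' t' ∧ w₁ * t * w₂ = t'

/-- The inclusion ambiguity `(g, g', w₁, w₂)` of `G` resolves. -/
def InclusionAmbiguityResolves (k : Type*) [Field k] {n : ℕ} (G : Set (FreeAlg k n))
    (g g' : FreeAlg k n) (w₁ w₂ : Word n) : Prop :=
  ∀ t t' : Word n, IsTip k g t → IsTip k g' t' →
    ∃ φ₁ φ₂ : FreeAlg k n →ₗ[k] FreeAlg k n, IsReduction k G φ₁ ∧ IsReduction k G φ₂ ∧
      φ₁ (wd k t' - (g'.coeff t')⁻¹ • g') = φ₂ (wd k w₁ * (wd k t - (g.coeff t)⁻¹ • g) * wd k w₂)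

/-- `(g₁, g₂, w₁, w₂)` is an overlap ambiguity of `G`. -/
def IsOverlapAmbiguity (k : Type*) [Field k] {n : ℕ} (G : Set (FreeAlg k n))
    (g₁ g₂ : FreeAlg k n) (w₁ w₂ : Word n) : Prop :=
  g₁ ∈ G ∧ g₂ ∈ G ∧ g₁ ≠ 0 ∧ g₂ ≠ 0 ∧ ¬(w₁ = 1 ∧ w₂ = 1) ∧
    ∃ t₁ t₂ : Word n, IsTip k g₁ t₁ ∧ IsTip k g₂ t₂ ∧ t₁ * w₂ = w₁ * t₂ ∧
      ¬WDvd t₂ w₂ ∧ ¬WDvd t₁ w₁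

/-- The overlap ambiguity `(g₁, g₂, w₁, w₂)` of `G` resolves. -/
def OverlapAmbiguityResolves (k : Type*) [Field k] {n : ℕ} (G : Set (FreeAlg k n))
    (g₁ g₂ : FreeAlg k n) (w₁ w₂ : Word n) : Prop :=
  ∀ t₁ t₂ : Word n, IsTip k g₁ t₁ → IsTip k g₂ t₂ →
    ∃ φ₁ φ₂ : FreeAlg k n →ₗ[k] FreeAlg k n, IsReduction k G φ₁ ∧ IsReduction k G φ₂ ∧
      φ₁ ((wd k t₁ - (g₁.coeff t₁)⁻¹ • g₁) * wd k w₂) = φ₂ (wd k w₁ * (wd k t₂ - (g₂.coeff t₂)⁻¹ • g₂))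

/-! ### Gröbner bases -/

/-- `G` is a Gröbner basis of the two-sided ideal `J` with respect to the order: `G ⊆ J` and
the tip of every nonzero element of `J` is divisible by the tip of some nonzero element
of `G`. -/
def IsGroebner (k : Type*) [Field k] {n : ℕ} (G : Set (FreeAlg k n))
    (J : TwoSidedIdeal (FreeAlg k n)) : Prop :=
  (∀ g ∈ G, g ∈ J) ∧
    ∀ f : FreeAlg k n, f ∈ J → f ≠ 0 → ∀ t : Word n, IsTip k f t →
      ∃ g ∈ G, g ≠ 0 ∧ ∃ tg : Word n, IsTip k g tg ∧ WDvd tg t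

/-- A minimal Gröbner basis: `0 ∉ G` and the tip of no element of `G` divides the tip of a
different element of `G`. -/
def IsMinimalGroebner (k : Type*) [Field k] {n : ℕ} (G : Set (FreeAlg k n))
    (J : TwoSidedIdeal (FreeAlg k n)) : Prop :=
  IsGroebner k G J ∧ (0 : FreeAlg k n) ∉ G ∧
    ∀ g ∈ G, ∀ g' ∈ G, g ≠ g' → ∀ t t' : Word n, IsTip k g t → IsTip k g' t' → ¬WDvd t t'

/-- A reduced Gröbner basis: minimal, every element has leading coefficient `1`, and the tip of
no element of `G` divides a word occurring with nonzero coefficient in a different element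
of `G`. -/
def IsReducedGroebner (k : Type*) [Field k] {n : ℕ} (G : Set (FreeAlg k n))
    (J : TwoSidedIdeal (FreeAlg k n)) : Prop :=
  IsMinimalGroebner k G J ∧ (∀ g ∈ G, ∀ t : Word n, IsTip k g t → g.coeff t = 1) ∧
    ∀ g ∈ G, ∀ g' ∈ G, g ≠ g' → ∀ t : Word n, IsTip k g t →
      ∀ w : Word n, g'.coeff w ≠ 0 → ¬WDvd t w

/-! ### Monoidal ideals -/

/-- A monoidal ideal of the free monoid of words: a set of words containing all multiples of
its elements. -/
def IsMonIdeal {n : ℕ} (M : Set (Word n)) : Prop :=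
  ∀ w ∈ M, ∀ w₁ w₂ : Word n, w₁ * w * w₂ ∈ M

/-- `N` generates `M` as a monoidal ideal: `M` is the smallest monoidal ideal containing `N`. -/
def GeneratesMonIdeal {n : ℕ} (N M : Set (Word n)) : Prop :=
  IsMonIdeal M ∧ N ⊆ M ∧ ∀ M' : Set (Word n), IsMonIdeal M' → N ⊆ M' → M ⊆ M'

/-! ### Chain words -/

/-- `v^{[ℓ]}`: equal to `v` for odd `ℓ` and to `v^δ` for even `ℓ`. -/
def pw {n : ℕ} (l : ℕ) (v : Mat n) : Mat n := if l % 2 = 1 then v else mD v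

/-- The word `v^{(ℓ)}_{j,i}` (for `ℓ ≥ 1`). -/
def chainWord (n : ℕ) (hn : 2 ≤ n) (v : Mat n) (l : ℕ) (j i : Fin n) : Word n :=
  if l = 1 then FreeMonoid.of (v j i.rev)
  else if l % 2 = 0 then
    FreeMonoid.of (v j (finN n hn)) *
      (FreeMonoid.of (mD v (fin1 n hn) (finN n hn)) *
          FreeMonoid.of (v (fin1 n hn) (finN n hn))) ^ ((l - 2) / 2) *
      FreeMonoid.of (mD v (fin1 n hn) i.rev)
  else
    FreeMonoid.of (v j (finN n hn)) *
      (FreeMonoid.of (mD v (fin1 n hn) (finN n hn)) *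
          FreeMonoid.of (v (fin1 n hn) (finN n hn))) ^ ((l - 3) / 2) *
      FreeMonoid.of (mD v (fin1 n hn) (finN n hn)) * FreeMonoid.of (v (fin1 n hn) i.rev)

/-- The set `C_ℓ = {v^{(ℓ)}_{j,i} : v ∈ V, (j,i) ∈ {1,…,n}²}` of `ℓ`-chains. -/
def Cset (n : ℕ) (hn : 2 ≤ n) (l : ℕ) : Set (Word n) :=
  {w | ∃ v ∈ V n, ∃ j i : Fin n, w = chainWord n hn v l j i}

/-! ### The quotient algebra `A = F/I`, the counit and the modules of the resolution -/

/-- The relation identifying each element of `R` with `0`; the induced ring congruence realizes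
the quotient `A = F/I` by the two-sided ideal `I` generated by `R`. -/
def relR (k : Type*) [Field k] (n : ℕ) : FreeAlg k n → FreeAlg k n → Prop :=
  fun a b => a ∈ rels k n ∧ b = 0

/-- The `k`-algebra `A = F/I`. -/
abbrev Aq (k : Type*) [Field k] (n : ℕ) := RingQuot (relR k n)

/-- The quotient map `F → A = F/I`. -/
noncomputable def pr (k : Type*) [Field k] (n : ℕ) : FreeAlg k n →ₐ[k] Aq k n :=
  RingQuot.mkAlgHom k (relR k n)

/-- The class `v_{j,i} + I ∈ A` of a generator. -/
noncomputable def gen (k : Type*) [Field k] {n : ℕ} (v : Mat n) (j i : Fin n) : Aq k n :=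
  pr k n (wd k (FreeMonoid.of (v j i)))

/-- The ring homomorphism `Aᵐᵒᵖ →+* k` induced by `ε` (using the commutativity of `k`). -/
noncomputable def epsOp (k : Type*) [Field k] (n : ℕ) (ε : Aq k n →ₐ[k] k) :
    (Aq k n)ᵐᵒᵖ →+* k where
  toFun a := ε a.unop
  map_one' := by simp
  map_mul' a b := by simp [mul_comm]
  map_zero' := by simp
  map_add' a b := by simp

/-- The right `A`-module `k_ε`: the field `k` with the right `A`-action induced by `ε`,
realized as a left module over the opposite algebra `Aᵐᵒᵖ`. -/
def KE (k : Type*) [Field k] (n : ℕ) (_ε : Aq k n →ₐ[k] k) : Type _ := k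

instance (k : Type*) [Field k] (n : ℕ) (ε : Aq k n →ₐ[k] k) : AddCommGroup (KE k n ε) :=
  inferInstanceAs (AddCommGroup k)

instance (k : Type*) [Field k] (n : ℕ) (ε : Aq k n →ₐ[k] k) : Module k (KE k n ε) :=
  inferInstanceAs (Module k k)

instance (k : Type*) [Field k] (n : ℕ) (ε : Aq k n →ₐ[k] k) : One (KE k n ε) := ⟨(1 : k)⟩

noncomputable instance (k : Type*) [Field k] (n : ℕ) (ε : Aq k n →ₐ[k] k) :
    Module ((Aq k n)ᵐᵒᵖ) (KE k n ε) :=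
  Module.compHom k (epsOp k n ε)

instance (k : Type*) [Field k] (n : ℕ) (ε : Aq k n →ₐ[k] k) :
    SMulCommClass ((Aq k n)ᵐᵒᵖ) k (KE k n ε) :=
  ⟨fun a c x => by
    show epsOp k n ε a • (c • x) = c • (epsOp k n ε a • x)
    rw [smul_smul, smul_smul, mul_comm]⟩

/-- The free right `A`-module `P_ℓ = kC_ℓ ⊗ₖ A` with basis `C_ℓ` (for `ℓ ≥ 1`), realized as a
left module over the opposite algebra `Aᵐᵒᵖ`. -/
abbrev Pmod (k : Type*) [Field k] (n : ℕ) (hn : 2 ≤ n) (l : ℕ) :=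
  ↥(Cset n hn l) →₀ Aq k n

/-- The element `v^{(ℓ)}_{j,i} ⊗ a` of `P_ℓ`. -/
noncomputable def bas (k : Type*) [Field k] (n : ℕ) (hn : 2 ≤ n) (l : ℕ) (v : Mat n)
    (hv : v ∈ V n) (j i : Fin n) (a : Aq k n) : Pmod k n hn l :=
  Finsupp.single ⟨chainWord n hn v l j i, ⟨v, hv, j, i, rfl⟩⟩ a

/-- Pre-composition with a homomorphism of right `A`-modules, as the `k`-linear map
`Hom_A(N, k_ε) → Hom_A(M, k_ε)`, `g ↦ g ∘ d`. -/
noncomputable def homMap (k : Type*) [Field k] {n : ℕ} (ε : Aq k n →ₐ[k] k) {M N : Type*}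
    [AddCommMonoid M] [AddCommMonoid N] [Module ((Aq k n)ᵐᵒᵖ) M] [Module ((Aq k n)ᵐᵒᵖ) N]
    (d : M →ₗ[(Aq k n)ᵐᵒᵖ] N) :
    (N →ₗ[(Aq k n)ᵐᵒᵖ] KE k n ε) →ₗ[k] (M →ₗ[(Aq k n)ᵐᵒᵖ] KE k n ε) where
  toFun g := g.comp d
  map_add' _ _ := LinearMap.ext fun _ => rfl
  map_smul' _ _ := LinearMap.ext fun _ => rfl

/-- The right-hand side of the defining formula for `d₂` on the basis element
`v^{(2)}_{j,i} ⊗ 1`. -/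
noncomputable def d2RHS (k : Type*) [Field k] (n : ℕ) (hn : 2 ≤ n) (v : Mat n)
    (hv : v ∈ V n) (j i : Fin n) : Pmod k n hn 1 :=
  (∑ s : Fin n, bas k n hn 1 v hv j s (gen k (mD v) s i.rev))
    + bas k n hn 1 (mD v) (V_mD hv) j.rev i 1
    - (if j = finN n hn ∧ i = finN n hn then
        ∑ s ∈ Finset.univ.filter (fun s : Fin n => s ≠ fin1 n hn),
          ((∑ t : Fin n, bas k n hn 1 v hv t s (gen k (mD v) s t.rev))
            + bas k n hn 1 (mD v) (V_mD hv) s s.rev 1)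
      else 0)

/-- The right-hand side of the defining formula for `d_ℓ`, `ℓ ≥ 3`, on the basis element
`v^{(ℓ)}_{j,i} ⊗ 1`. -/
noncomputable def dTail (k : Type*) [Field k] (n : ℕ) (hn : 2 ≤ n) (l : ℕ) (v : Mat n)
    (hv : v ∈ V n) (j i : Fin n) : Pmod k n hn (l - 1) :=
  (∑ s : Fin n, bas k n hn (l - 1) v hv j s (gen k (pw l v) s i.rev))
    + bas k n hn (l - 1) (mD v) (V_mD hv) j.rev i ((-1 : Aq k n) ^ l)
    + (if j = finN n hn then
        ((bas k n hn (l - 1) (mT v) (V_mT hv) (fin1 n hn) (fin1 n hn)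
              (gen k (pw l (mT v)) i.rev (finN n hn))
            + (if l = 3 then
                ∑ s ∈ Finset.univ.filter (fun s : Fin n => s ≠ fin1 n hn ∧ s ≠ finN n hn),
                  bas k n hn (l - 1) (mT v) (V_mT hv) s s (gen k (pw l (mT v)) i.rev (finN n hn))
              else 0))
          - (if i = finN n hn then
              (∑ s : Fin n, bas k n hn (l - 1) (mT v) (V_mT hv) (fin1 n hn) s
                  (gen k (pw l (mT v)) s (finN n hn)))
                + bas k n hn (l - 1) (mS v) (V_mS hv) (finN n hn) (fin1 n hn) ((-1 : Aq k n) ^ l)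
            else 0))
      else 0)
    + (if j = fin1 n hn ∧ i = finN n hn then
        bas k n hn (l - 1) (mS v) (V_mS hv) (fin1 n hn) (fin1 n hn) ((-1 : Aq k n) ^ l)
          + (if l = 3 then
              ∑ s ∈ Finset.univ.filter (fun s : Fin n => s ≠ fin1 n hn ∧ s ≠ finN n hn),
                bas k n hn (l - 1) (mS v) (V_mS hv) s s ((-1 : Aq k n) ^ l)
            else 0)
      else 0)

/-- The system of identities from STATEMENT 14, for a fixed `v ∈ V`. -/
noncomputable def cond14 (k : Type*) [Field k] {n : ℕ} (hn : 2 ≤ n) (ε : Aq k n →ₐ[k] k)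
    (g : Pmod k n hn 1 →ₗ[(Aq k n)ᵐᵒᵖ] KE k n ε) (v : Mat n) (hv : v ∈ V n) : Prop :=
  ∀ j i : Fin n, g (bas k n hn 1 (mS v) (V_mS hv) j i 1) = -g (bas k n hn 1 v hv i j 1)

/-- The system of identities (1)–(4) from STATEMENT 16, for a fixed `v ∈ V`. -/
noncomputable def cond16 (k : Type*) [Field k] {n : ℕ} (hn : 2 ≤ n) (ε : Aq k n →ₐ[k] k)
    (l : ℕ) (g : Pmod k n hn (l - 1) →ₗ[(Aq k n)ᵐᵒᵖ] KE k n ε) (v : Mat n)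
    (hv : v ∈ V n) : Prop :=
  (∀ j i : Fin n, (j, i) ≠ (fin1 n hn, fin1 n hn) →
      g (bas k n hn (l - 1) (mT v) (V_mT hv) j i 1) =
        -(((-1 : k) ^ l) • g (bas k n hn (l - 1) (mS v) (V_mS hv) j.rev i.rev 1))
          - (if j = finN n hn ∧ i = finN n hn then
              g (bas k n hn (l - 1) v hv (fin1 n hn) (fin1 n hn) 1)
                + (if l = 3 then
                    ∑ s ∈ Finset.univ.filter (fun s : Fin n => s ≠ fin1 n hn ∧ s ≠ finN n hn),
                      g (bas k n hn (l - 1) v hv s s 1)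
                  else 0)
            else 0)) ∧
  (∀ j i : Fin n, (j, i) ≠ (fin1 n hn, fin1 n hn) →
      g (bas k n hn (l - 1) (mD v) (V_mD hv) j i 1) =
        -(((-1 : k) ^ l) • g (bas k n hn (l - 1) v hv j.rev i.rev 1))
          - (if j = finN n hn ∧ i = finN n hn then
              g (bas k n hn (l - 1) (mS v) (V_mS hv) (fin1 n hn) (fin1 n hn) 1)
                + (if l = 3 then
                    ∑ s ∈ Finset.univ.filter (fun s : Fin n => s ≠ fin1 n hn ∧ s ≠ finN n hn),
                      g (bas k n hn (l - 1) (mS v) (V_mS hv) s s 1)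
                  else 0)
            else 0)) ∧
  (g (bas k n hn (l - 1) (mD v) (V_mD hv) (fin1 n hn) (fin1 n hn) 1) =
      -(((-1 : k) ^ l) • g (bas k n hn (l - 1) (mT v) (V_mT hv) (fin1 n hn) (fin1 n hn) 1))
        - ((-1 : k) ^ l) • g (bas k n hn (l - 1) v hv (finN n hn) (finN n hn) 1)
        + (if l = 3 then
            ∑ s ∈ Finset.univ.filter (fun s : Fin n => s ≠ fin1 n hn ∧ s ≠ finN n hn),
              g (bas k n hn (l - 1) (mS v) (V_mS hv) s s 1)
          else 0)) ∧
  (g (bas k n hn (l - 1) (mS v) (V_mS hv) (finN n hn) (finN n hn) 1) =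
      -(if l = 3 then
          ∑ s ∈ Finset.univ.filter (fun s : Fin n => s ≠ fin1 n hn ∧ s ≠ finN n hn),
            g (bas k n hn (l - 1) (mS v) (V_mS hv) s s 1)
        else 0)
        + ((-1 : k) ^ l) • (g (bas k n hn (l - 1) v hv (finN n hn) (finN n hn) 1)
            + (if l = 3 then
                ∑ s ∈ Finset.univ.filter (fun s : Fin n => s ≠ fin1 n hn ∧ s ≠ finN n hn),
                  g (bas k n hn (l - 1) v hv s s 1)
              else 0)))



section Aux16

variable {k : Type*} [Field k] {n : ℕ}

theorem rev_fin1 (hn : 2 ≤ n) : (fin1 n hn).rev = finN n hn := by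
  ext; simp [fin1, finN, Fin.val_rev]

theorem rev_finN (hn : 2 ≤ n) : (finN n hn).rev = fin1 n hn := by
  ext; simp [fin1, finN, Fin.val_rev]; omega

theorem fin1_ne_finN (hn : 2 ≤ n) : fin1 n hn ≠ finN n hn := by
  simp [fin1, finN, Fin.ext_iff]; omega

theorem rev_eq_finN_iff (hn : 2 ≤ n) (i : Fin n) : i.rev = finN n hn ↔ i = fin1 n hn := by
  rw [← rev_fin1 hn, Fin.rev_inj]

theorem rev_eq_fin1_iff (hn : 2 ≤ n) (i : Fin n) : i.rev = fin1 n hn ↔ i = finN n hn := by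
  rw [← rev_finN hn, Fin.rev_inj]

theorem mT_mT (v : Mat n) : mT (mT v) = v := rfl
theorem mS_mT (v : Mat n) : mS (mT v) = mD v := rfl
theorem mD_mT (v : Mat n) : mD (mT v) = mS v := rfl
theorem mT_mS (v : Mat n) : mT (mS v) = mD v := rfl
theorem mT_mD (v : Mat n) : mT (mD v) = mS v := rfl

theorem pw_mem {l : ℕ} {v : Mat n} (hv : v ∈ V n) : pw l v ∈ V n := by
  unfold pw; split
  · exact hv
  · exact V_mD hv

/-- the conditional diagonal sum -/
def SS (l : ℕ) (hn : 2 ≤ n) (f : Fin n → Fin n → k) : k :=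
  if l = 3 then
    ∑ s ∈ Finset.univ.filter (fun s : Fin n => s ≠ fin1 n hn ∧ s ≠ finN n hn), f s s
  else 0

theorem sum_rev_filter {M : Type*} [AddCommMonoid M] (hn : 2 ≤ n) (f : Fin n → M) :
    ∑ s ∈ Finset.univ.filter (fun s : Fin n => s ≠ fin1 n hn ∧ s ≠ finN n hn), f s.rev
      = ∑ s ∈ Finset.univ.filter (fun s : Fin n => s ≠ fin1 n hn ∧ s ≠ finN n hn), f s := by
  apply Finset.sum_nbij' (i := Fin.rev) (j := Fin.rev)
  · intro a ha
    simp only [Finset.mem_filter, Finset.mem_univ, true_and] at ha ⊢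
    rw [Ne, Ne, rev_eq_fin1_iff hn, rev_eq_finN_iff hn]
    exact ⟨ha.2, ha.1⟩
  · intro a ha
    simp only [Finset.mem_filter, Finset.mem_univ, true_and] at ha ⊢
    rw [Ne, Ne, rev_eq_fin1_iff hn, rev_eq_finN_iff hn]
    exact ⟨ha.2, ha.1⟩
  · intro a _; exact Fin.rev_rev a
  · intro a _; exact Fin.rev_rev a
  · intro a _; rfl

end Aux16
section Aux2

variable {k : Type*} [Field k] {n : ℕ}

theorem bas_smul (hn : 2 ≤ n) (L : ℕ) (v : Mat n) (hv : v ∈ V n) (j i : Fin n) (a : Aq k n) :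
    bas k n hn L v hv j i a = MulOpposite.op a • bas k n hn L v hv j i 1 := by
  unfold bas
  rw [Finsupp.smul_single, op_smul_eq_mul, one_mul]

theorem ke_smul (ε : Aq k n →ₐ[k] k) (a : Aq k n) (x : KE k n ε) :
    (MulOpposite.op a) • x = ε a • x := rfl

theorem g_bas (hn : 2 ≤ n) (ε : Aq k n →ₐ[k] k) (L : ℕ)
    (g : Pmod k n hn L →ₗ[(Aq k n)ᵐᵒᵖ] KE k n ε)
    (v : Mat n) (hv : v ∈ V n) (j i : Fin n) (a : Aq k n) :
    g (bas k n hn L v hv j i a) = ε a • g (bas k n hn L v hv j i 1) := by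
  rw [bas_smul, map_smul, ke_smul]

theorem eps_neg_one_pow (ε : Aq k n →ₐ[k] k) (l : ℕ) :
    ε ((-1 : Aq k n) ^ l) = (-1 : k) ^ l := by
  rw [map_pow, map_neg, map_one]

theorem comp_eq_zero_iff (hn : 2 ≤ n) (ε : Aq k n →ₐ[k] k) (l : ℕ)
    (dl : Pmod k n hn l →ₗ[(Aq k n)ᵐᵒᵖ] Pmod k n hn (l - 1))
    (hdl : ∀ (v : Mat n) (hv : v ∈ V n) (j i : Fin n),
      dl (bas k n hn l v hv j i 1) = dTail k n hn l v hv j i)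
    (g : Pmod k n hn (l - 1) →ₗ[(Aq k n)ᵐᵒᵖ] KE k n ε) :
    g.comp dl = 0 ↔ ∀ (v : Mat n) (hv : v ∈ V n) (j i : Fin n),
      g (dTail k n hn l v hv j i) = 0 := by
  constructor
  · intro h v hv j i
    have := congrArg (fun φ => φ (bas k n hn l v hv j i 1)) h
    simpa [hdl v hv j i] using this
  · intro h
    apply LinearMap.ext
    intro x
    induction x using Finsupp.induction_linear with
    | zero => simp
    | add f f' hf hf' =>
      simp only [LinearMap.comp_apply, LinearMap.zero_apply] at hf hf' ⊢
      rw [map_add, map_add, hf, hf', add_zero]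
    | single c a =>
      obtain ⟨w, hw⟩ := c
      obtain ⟨v, hv, j, i, rfl⟩ := hw
      have hb : (Finsupp.single (⟨chainWord n hn v l j i, ⟨v, hv, j, i, rfl⟩⟩ :
          ↥(Cset n hn l)) a) = bas k n hn l v hv j i a := rfl
      rw [hb, bas_smul, LinearMap.comp_apply, LinearMap.zero_apply, map_smul, map_smul,
        hdl v hv j i, h v hv j i, smul_zero]

end Aux2
section Abstract16

variable {k : Type*} [Field k] {M : Type*} [AddCommGroup M] [Module k M] {n : ℕ}

/-- The conditional diagonal sum. -/
def SSm (l : ℕ) (hn : 2 ≤ n) (f : Fin n → Fin n → M) : M :=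
  if l = 3 then
    ∑ s ∈ Finset.univ.filter (fun s : Fin n => s ≠ fin1 n hn ∧ s ≠ finN n hn), f s s
  else 0

theorem SSm_rel (l : ℕ) (hn : 2 ≤ n) (e : k) (x y : Fin n → Fin n → M)
    (hyp : ∀ s : Fin n, s ≠ fin1 n hn → s ≠ finN n hn → x s s = -(e • y s.rev s.rev)) :
    SSm l hn x = -(e • SSm l hn y) := by
  unfold SSm
  split
  · rw [Finset.sum_congr rfl (fun s hs => by
      simp only [Finset.mem_filter, Finset.mem_univ, true_and] at hs
      exact hyp s hs.1 hs.2)]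
    rw [Finset.sum_neg_distrib, ← Finset.smul_sum, sum_rev_filter hn (fun t => y t t)]
  · simp

/-- "E-form" family of identities. -/
def EP (l : ℕ) (hn : 2 ≤ n) (e : k) (a b c d : Fin n → Fin n → M) : Prop :=
  ∀ j i : Fin n,
    a j i + e • d j.rev i.rev
      + (if j = finN n hn ∧ i = finN n hn then
          b (fin1 n hn) (fin1 n hn) + SSm l hn b else 0)
      - (if j = finN n hn ∧ i = fin1 n hn then
          b (fin1 n hn) (finN n hn) + e • c (finN n hn) (fin1 n hn) else 0)
      + (if j = fin1 n hn ∧ i = fin1 n hn then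
          e • (c (fin1 n hn) (fin1 n hn) + SSm l hn c) else 0) = 0

/-- "D-form" family of identities. -/
def DP (l : ℕ) (hn : 2 ≤ n) (e : k) (a b c d : Fin n → Fin n → M) : Prop :=
  ∀ j i : Fin n,
    a j i.rev + e • d j.rev i
      + (if j = finN n hn ∧ i = fin1 n hn then
          b (fin1 n hn) (fin1 n hn) + SSm l hn b else 0)
      - (if j = finN n hn ∧ i = finN n hn then
          b (fin1 n hn) (finN n hn) + e • c (finN n hn) (fin1 n hn) else 0)
      + (if j = fin1 n hn ∧ i = finN n hn then
          e • (c (fin1 n hn) (fin1 n hn) + SSm l hn c) else 0) = 0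

theorem DP_iff_EP (l : ℕ) (hn : 2 ≤ n) (e : k) (a b c d : Fin n → Fin n → M) :
    DP l hn e a b c d ↔ EP l hn e a b c d := by
  constructor
  · intro h j i
    have H := h j i.rev
    simp only [Fin.rev_rev, rev_eq_fin1_iff hn, rev_eq_finN_iff hn] at H
    exact H
  · intro h j i
    have H := h j i.rev
    simp only [Fin.rev_rev, rev_eq_fin1_iff hn, rev_eq_finN_iff hn] at H
    exact H

/-- The "cond16"-shaped system of identities. -/
def CP (l : ℕ) (hn : 2 ≤ n) (e : k) (a b c d : Fin n → Fin n → M) : Prop :=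
  (∀ j i : Fin n, (j, i) ≠ (fin1 n hn, fin1 n hn) →
      b j i = -(e • c j.rev i.rev)
        - (if j = finN n hn ∧ i = finN n hn then
            a (fin1 n hn) (fin1 n hn) + SSm l hn a else 0)) ∧
  (∀ j i : Fin n, (j, i) ≠ (fin1 n hn, fin1 n hn) →
      d j i = -(e • a j.rev i.rev)
        - (if j = finN n hn ∧ i = finN n hn then
            c (fin1 n hn) (fin1 n hn) + SSm l hn c else 0)) ∧
  (d (fin1 n hn) (fin1 n hn) = -(e • b (fin1 n hn) (fin1 n hn))
      - e • a (finN n hn) (finN n hn) + SSm l hn c) ∧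
  (c (finN n hn) (finN n hn) = -(SSm l hn c)
      + e • (a (finN n hn) (finN n hn) + SSm l hn a))

end Abstract16
section Abstract16b

variable {k : Type*} [Field k] {M : Type*} [AddCommGroup M] [Module k M] {n : ℕ}

theorem CP_iff_EPs (l : ℕ) (hn : 2 ≤ n) (e : k) (he2 : ∀ x : M, e • e • x = x)
    (a b c d : Fin n → Fin n → M) :
    CP l hn e a b c d ↔
      (EP l hn e a b c d ∧ EP l hn e b a d c ∧ EP l hn e c d a b ∧ EP l hn e d c b a) := by
  have hoN : fin1 n hn ≠ finN n hn := fin1_ne_finN hn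
  have hNo : finN n hn ≠ fin1 n hn := hoN.symm
  constructor
  · rintro ⟨h1, h2, h3, h4⟩
    have h1' : ∀ j i : Fin n, ¬(j = fin1 n hn ∧ i = fin1 n hn) →
        b j i = -(e • c j.rev i.rev)
          - (if j = finN n hn ∧ i = finN n hn then
              a (fin1 n hn) (fin1 n hn) + SSm l hn a else 0) :=
      fun j i h => h1 j i (by simpa [Prod.ext_iff] using h)
    have h2' : ∀ j i : Fin n, ¬(j = fin1 n hn ∧ i = fin1 n hn) →
        d j i = -(e • a j.rev i.rev)
          - (if j = finN n hn ∧ i = finN n hn then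
              c (fin1 n hn) (fin1 n hn) + SSm l hn c else 0) :=
      fun j i h => h2 j i (by simpa [Prod.ext_iff] using h)
    have hSb : SSm l hn b = -(e • SSm l hn c) := by
      refine SSm_rel l hn e b c (fun s hso hsN => ?_)
      have H := h1' s s (fun h => hso h.1)
      rwa [if_neg (fun h => hsN h.1), sub_zero] at H
    have hSd : SSm l hn d = -(e • SSm l hn a) := by
      refine SSm_rel l hn e d a (fun s hso hsN => ?_)
      have H := h2' s s (fun h => hso h.1)
      rwa [if_neg (fun h => hsN h.1), sub_zero] at H
    refine ⟨?_, ?_, ?_, ?_⟩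
    -- EP a b c d
    · intro j i
      by_cases hNN : j = finN n hn ∧ i = finN n hn
      · obtain ⟨rfl, rfl⟩ := hNN
        simp only [and_self, if_true, hNo, and_false, if_false, rev_finN hn, sub_zero, add_zero,
          ite_true, ite_false, eq_self_iff_true, true_and, false_and]
        rw [h3, hSb]
        simp only [smul_add, smul_sub, smul_neg, he2]
        abel
      · by_cases hNo2 : j = finN n hn ∧ i = fin1 n hn
        · obtain ⟨rfl, rfl⟩ := hNo2
          simp only [hoN, hNo, and_false, false_and, and_true, true_and, and_self, if_false,
            ite_false, rev_finN hn, rev_fin1 hn, add_zero, if_true, ite_true,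
            eq_self_iff_true]
          have H2 := h2' (fin1 n hn) (finN n hn) (fun h => hNo h.2)
          rw [if_neg (fun h => hoN h.1), sub_zero, rev_fin1 hn, rev_finN hn] at H2
          have H1 := h1' (fin1 n hn) (finN n hn) (fun h => hNo h.2)
          rw [if_neg (fun h => hoN h.1), sub_zero, rev_fin1 hn, rev_finN hn] at H1
          rw [H2, H1]
          simp only [smul_neg, he2]
          abel
        · by_cases hoo : j = fin1 n hn ∧ i = fin1 n hn
          · obtain ⟨rfl, rfl⟩ := hoo
            simp only [hoN, hNo, and_false, false_and, and_self, if_false, ite_false,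
              rev_fin1 hn, add_zero, sub_zero, if_true, ite_true, eq_self_iff_true]
            have H2 := h2' (finN n hn) (finN n hn) (fun h => hNo h.1)
            rw [if_pos ⟨rfl, rfl⟩, rev_finN hn] at H2
            rw [H2]
            simp only [smul_add, smul_sub, smul_neg, he2]
            abel
          · rw [if_neg hNN, if_neg hNo2, if_neg hoo, add_zero, sub_zero, add_zero]
            have H2 := h2' j.rev i.rev
              (fun h => hNN ⟨(rev_eq_fin1_iff hn j).mp h.1, (rev_eq_fin1_iff hn i).mp h.2⟩)
            rw [if_neg (fun h => hoo ⟨(rev_eq_finN_iff hn j).mp h.1,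
              (rev_eq_finN_iff hn i).mp h.2⟩), sub_zero, Fin.rev_rev, Fin.rev_rev] at H2
            rw [H2]
            simp only [smul_neg, he2]
            abel
    -- EP b a d c
    · intro j i
      by_cases hNN : j = finN n hn ∧ i = finN n hn
      · obtain ⟨rfl, rfl⟩ := hNN
        simp only [and_self, if_true, hNo, and_false, if_false, rev_finN hn, sub_zero, add_zero,
          ite_true, ite_false, eq_self_iff_true, true_and, false_and]
        have H1 := h1' (finN n hn) (finN n hn) (fun h => hNo h.1)
        rw [if_pos ⟨rfl, rfl⟩, rev_finN hn] at H1
        rw [H1]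
        abel
      · by_cases hNo2 : j = finN n hn ∧ i = fin1 n hn
        · obtain ⟨rfl, rfl⟩ := hNo2
          simp only [hoN, hNo, and_false, false_and, and_true, true_and, and_self, if_false,
            ite_false, rev_finN hn, rev_fin1 hn, add_zero, if_true, ite_true,
            eq_self_iff_true]
          have H1 := h1' (finN n hn) (fin1 n hn) (fun h => hNo h.1)
          rw [if_neg (fun h => hoN h.2), sub_zero, rev_finN hn, rev_fin1 hn] at H1
          have H2 := h2' (finN n hn) (fin1 n hn) (fun h => hNo h.1)
          rw [if_neg (fun h => hoN h.2), sub_zero, rev_finN hn, rev_fin1 hn] at H2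
          rw [H1, H2]
          simp only [smul_neg, he2]
          abel
        · by_cases hoo : j = fin1 n hn ∧ i = fin1 n hn
          · obtain ⟨rfl, rfl⟩ := hoo
            simp only [hoN, hNo, and_false, false_and, and_self, if_false, ite_false,
              rev_fin1 hn, add_zero, sub_zero, if_true, ite_true, eq_self_iff_true]
            rw [h4, h3, hSd]
            simp only [smul_add, smul_sub, smul_neg, he2]
            abel
          · rw [if_neg hNN, if_neg hNo2, if_neg hoo, add_zero, sub_zero, add_zero]
            have H1 := h1' j i hoo
            rw [if_neg hNN, sub_zero] at H1
            rw [H1]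
            abel
    -- EP c d a b
    · intro j i
      by_cases hNN : j = finN n hn ∧ i = finN n hn
      · obtain ⟨rfl, rfl⟩ := hNN
        simp only [and_self, if_true, hNo, and_false, if_false, rev_finN hn, sub_zero, add_zero,
          ite_true, ite_false, eq_self_iff_true, true_and, false_and]
        rw [h4, h3, hSd]
        simp only [smul_add, smul_sub, smul_neg, he2]
        abel
      · by_cases hNo2 : j = finN n hn ∧ i = fin1 n hn
        · obtain ⟨rfl, rfl⟩ := hNo2
          simp only [hoN, hNo, and_false, false_and, and_true, true_and, and_self, if_false,
            ite_false, rev_finN hn, rev_fin1 hn, add_zero, if_true, ite_true,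
            eq_self_iff_true]
          have H1 := h1' (fin1 n hn) (finN n hn) (fun h => hNo h.2)
          rw [if_neg (fun h => hoN h.1), sub_zero, rev_fin1 hn, rev_finN hn] at H1
          have H2 := h2' (fin1 n hn) (finN n hn) (fun h => hNo h.2)
          rw [if_neg (fun h => hoN h.1), sub_zero, rev_fin1 hn, rev_finN hn] at H2
          rw [H1, H2]
          simp only [smul_neg, he2]
          abel
        · by_cases hoo : j = fin1 n hn ∧ i = fin1 n hn
          · obtain ⟨rfl, rfl⟩ := hoo
            simp only [hoN, hNo, and_false, false_and, and_self, if_false, ite_false,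
              rev_fin1 hn, add_zero, sub_zero, if_true, ite_true, eq_self_iff_true]
            have H1 := h1' (finN n hn) (finN n hn) (fun h => hNo h.1)
            rw [if_pos ⟨rfl, rfl⟩, rev_finN hn] at H1
            rw [H1]
            simp only [smul_add, smul_sub, smul_neg, he2]
            abel
          · rw [if_neg hNN, if_neg hNo2, if_neg hoo, add_zero, sub_zero, add_zero]
            have H1 := h1' j.rev i.rev
              (fun h => hNN ⟨(rev_eq_fin1_iff hn j).mp h.1, (rev_eq_fin1_iff hn i).mp h.2⟩)
            rw [if_neg (fun h => hoo ⟨(rev_eq_finN_iff hn j).mp h.1,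
              (rev_eq_finN_iff hn i).mp h.2⟩), sub_zero, Fin.rev_rev, Fin.rev_rev] at H1
            rw [H1]
            simp only [smul_neg, he2]
            abel
    -- EP d c b a
    · intro j i
      by_cases hNN : j = finN n hn ∧ i = finN n hn
      · obtain ⟨rfl, rfl⟩ := hNN
        simp only [and_self, if_true, hNo, and_false, if_false, rev_finN hn, sub_zero, add_zero,
          ite_true, ite_false, eq_self_iff_true, true_and, false_and]
        have H2 := h2' (finN n hn) (finN n hn) (fun h => hNo h.1)
        rw [if_pos ⟨rfl, rfl⟩, rev_finN hn] at H2
        rw [H2]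
        abel
      · by_cases hNo2 : j = finN n hn ∧ i = fin1 n hn
        · obtain ⟨rfl, rfl⟩ := hNo2
          simp only [hoN, hNo, and_false, false_and, and_true, true_and, and_self, if_false,
            ite_false, rev_finN hn, rev_fin1 hn, add_zero, if_true, ite_true,
            eq_self_iff_true]
          have H2 := h2' (finN n hn) (fin1 n hn) (fun h => hNo h.1)
          rw [if_neg (fun h => hoN h.2), sub_zero, rev_finN hn, rev_fin1 hn] at H2
          have H1 := h1' (finN n hn) (fin1 n hn) (fun h => hNo h.1)
          rw [if_neg (fun h => hoN h.2), sub_zero, rev_finN hn, rev_fin1 hn] at H1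
          rw [H2, H1]
          simp only [smul_neg, he2]
          abel
        · by_cases hoo : j = fin1 n hn ∧ i = fin1 n hn
          · obtain ⟨rfl, rfl⟩ := hoo
            simp only [hoN, hNo, and_false, false_and, and_self, if_false, ite_false,
              rev_fin1 hn, add_zero, sub_zero, if_true, ite_true, eq_self_iff_true]
            rw [h3, hSb]
            simp only [smul_add, smul_sub, smul_neg, he2]
            abel
          · rw [if_neg hNN, if_neg hNo2, if_neg hoo, add_zero, sub_zero, add_zero]
            have H2 := h2' j i hoo
            rw [if_neg hNN, sub_zero] at H2
            rw [H2]
            abel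
  · rintro ⟨hEa, hEb, hEc, hEd⟩
    have HAD : a (fin1 n hn) (finN n hn) + e • d (finN n hn) (fin1 n hn) = 0 := by
      have H := hEa (fin1 n hn) (finN n hn)
      rw [if_neg (fun h => hoN h.1), if_neg (fun h => hoN h.1),
        if_neg (fun h => hNo h.2), add_zero, sub_zero, add_zero, rev_fin1 hn, rev_finN hn] at H
      exact H
    have HCB : c (fin1 n hn) (finN n hn) + e • b (finN n hn) (fin1 n hn) = 0 := by
      have H := hEc (fin1 n hn) (finN n hn)
      rw [if_neg (fun h => hoN h.1), if_neg (fun h => hoN h.1),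
        if_neg (fun h => hNo h.2), add_zero, sub_zero, add_zero, rev_fin1 hn, rev_finN hn] at H
      exact H
    have hSb : SSm l hn b = -(e • SSm l hn c) := by
      refine SSm_rel l hn e b c (fun s hso hsN => ?_)
      have H := hEb s s
      rw [if_neg (fun h => hsN h.1), if_neg (fun h => hsN h.1), if_neg (fun h => hso h.1),
        add_zero, sub_zero, add_zero] at H
      exact eq_neg_of_add_eq_zero_left H
    have hSd : SSm l hn d = -(e • SSm l hn a) := by
      refine SSm_rel l hn e d a (fun s hso hsN => ?_)
      have H := hEd s s
      rw [if_neg (fun h => hsN h.1), if_neg (fun h => hsN h.1), if_neg (fun h => hso h.1),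
        add_zero, sub_zero, add_zero] at H
      exact eq_neg_of_add_eq_zero_left H
    have comp1 : ∀ j i : Fin n, (j, i) ≠ (fin1 n hn, fin1 n hn) →
        b j i = -(e • c j.rev i.rev)
          - (if j = finN n hn ∧ i = finN n hn then
              a (fin1 n hn) (fin1 n hn) + SSm l hn a else 0) := by
      intro j i hji
      have hji' : ¬(j = fin1 n hn ∧ i = fin1 n hn) := by simpa [Prod.ext_iff] using hji
      by_cases hNN : j = finN n hn ∧ i = finN n hn
      · obtain ⟨rfl, rfl⟩ := hNN
        rw [if_pos ⟨rfl, rfl⟩, rev_finN hn]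
        have H := hEb (finN n hn) (finN n hn)
        rw [if_pos ⟨rfl, rfl⟩, if_neg (fun h => hNo h.2), if_neg (fun h => hNo h.1),
          sub_zero, add_zero, rev_finN hn] at H
        rw [← sub_eq_zero, ← H]
        abel
      · rw [if_neg hNN]
        by_cases hNo2 : j = finN n hn ∧ i = fin1 n hn
        · obtain ⟨rfl, rfl⟩ := hNo2
          rw [rev_finN hn, rev_fin1 hn, sub_zero]
          have H := hEb (finN n hn) (fin1 n hn)
          rw [if_neg (fun h => hoN h.2), if_pos ⟨rfl, rfl⟩, if_neg (fun h => hNo h.1),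
            add_zero, add_zero, rev_finN hn, rev_fin1 hn] at H
          rw [HAD, sub_zero] at H
          rw [← sub_eq_zero, ← H]
          abel
        · rw [sub_zero]
          have H := hEb j i
          rw [if_neg hNN, if_neg hNo2, if_neg hji', add_zero, sub_zero, add_zero] at H
          exact eq_neg_of_add_eq_zero_left H
    have comp2 : ∀ j i : Fin n, (j, i) ≠ (fin1 n hn, fin1 n hn) →
        d j i = -(e • a j.rev i.rev)
          - (if j = finN n hn ∧ i = finN n hn then
              c (fin1 n hn) (fin1 n hn) + SSm l hn c else 0) := by
      intro j i hji
      have hji' : ¬(j = fin1 n hn ∧ i = fin1 n hn) := by simpa [Prod.ext_iff] using hji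
      by_cases hNN : j = finN n hn ∧ i = finN n hn
      · obtain ⟨rfl, rfl⟩ := hNN
        rw [if_pos ⟨rfl, rfl⟩, rev_finN hn]
        have H := hEd (finN n hn) (finN n hn)
        rw [if_pos ⟨rfl, rfl⟩, if_neg (fun h => hNo h.2), if_neg (fun h => hNo h.1),
          sub_zero, add_zero, rev_finN hn] at H
        rw [← sub_eq_zero, ← H]
        abel
      · rw [if_neg hNN]
        by_cases hNo2 : j = finN n hn ∧ i = fin1 n hn
        · obtain ⟨rfl, rfl⟩ := hNo2
          rw [rev_finN hn, rev_fin1 hn, sub_zero]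
          have H := hEd (finN n hn) (fin1 n hn)
          rw [if_neg (fun h => hoN h.2), if_pos ⟨rfl, rfl⟩, if_neg (fun h => hNo h.1),
            add_zero, add_zero, rev_finN hn, rev_fin1 hn] at H
          rw [HCB, sub_zero] at H
          rw [← sub_eq_zero, ← H]
          abel
        · rw [sub_zero]
          have H := hEd j i
          rw [if_neg hNN, if_neg hNo2, if_neg hji', add_zero, sub_zero, add_zero] at H
          exact eq_neg_of_add_eq_zero_left H
    have comp3 : d (fin1 n hn) (fin1 n hn) = -(e • b (fin1 n hn) (fin1 n hn))
        - e • a (finN n hn) (finN n hn) + SSm l hn c := by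
      have H := hEa (finN n hn) (finN n hn)
      rw [if_pos ⟨rfl, rfl⟩, if_neg (fun h => hNo h.2), if_neg (fun h => hNo h.1),
        sub_zero, add_zero, rev_finN hn] at H
      rw [hSb] at H
      have H' := congrArg (fun t : M => e • t) H
      simp only [smul_add, smul_neg, smul_zero, he2] at H'
      rw [← sub_eq_zero, ← H']
      abel
    have comp4 : c (finN n hn) (finN n hn) = -(SSm l hn c)
        + e • (a (finN n hn) (finN n hn) + SSm l hn a) := by
      have H := hEc (finN n hn) (finN n hn)
      rw [if_pos ⟨rfl, rfl⟩, if_neg (fun h => hNo h.2), if_neg (fun h => hNo h.1),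
        sub_zero, add_zero, rev_finN hn] at H
      rw [comp3, hSd] at H
      rw [← sub_eq_zero, ← H]
      simp only [smul_add, smul_sub, smul_neg, he2]
      abel
    exact ⟨comp1, comp2, comp3, comp4⟩

end Abstract16b
section Concrete16

variable {k : Type*} [Field k] {n : ℕ}

theorem bas_fun_congr (hn : 2 ≤ n) (ε : Aq k n →ₐ[k] k) (L : ℕ)
    (g : Pmod k n hn L →ₗ[(Aq k n)ᵐᵒᵖ] KE k n ε) {w w' : Mat n} (h : w = w')
    (hw : w ∈ V n) (hw' : w' ∈ V n) :
    (fun j i => g (bas k n hn L w hw j i 1)) = (fun j i => g (bas k n hn L w' hw' j i 1)) := by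
  subst h; rfl

theorem g_dTail (hn : 2 ≤ n) (ε : Aq k n →ₐ[k] k)
    (hε : ∀ v ∈ V n, ∀ j i : Fin n, ε (gen k v j i) = if j = i then 1 else 0) (l : ℕ)
    (g : Pmod k n hn (l - 1) →ₗ[(Aq k n)ᵐᵒᵖ] KE k n ε)
    (v : Mat n) (hv : v ∈ V n) (j i : Fin n) :
    g (dTail k n hn l v hv j i) =
      g (bas k n hn (l - 1) v hv j i.rev 1)
      + ((-1 : k) ^ l) • g (bas k n hn (l - 1) (mD v) (V_mD hv) j.rev i 1)
      + (if j = finN n hn ∧ i = fin1 n hn then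
          g (bas k n hn (l - 1) (mT v) (V_mT hv) (fin1 n hn) (fin1 n hn) 1)
            + SSm l hn (fun j i => g (bas k n hn (l - 1) (mT v) (V_mT hv) j i 1)) else 0)
      - (if j = finN n hn ∧ i = finN n hn then
          g (bas k n hn (l - 1) (mT v) (V_mT hv) (fin1 n hn) (finN n hn) 1)
            + ((-1 : k) ^ l) • g (bas k n hn (l - 1) (mS v) (V_mS hv) (finN n hn) (fin1 n hn) 1)
          else 0)
      + (if j = fin1 n hn ∧ i = finN n hn then
          ((-1 : k) ^ l) • (g (bas k n hn (l - 1) (mS v) (V_mS hv) (fin1 n hn) (fin1 n hn) 1)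
            + SSm l hn (fun j i => g (bas k n hn (l - 1) (mS v) (V_mS hv) j i 1))) else 0) := by
  have hoN : fin1 n hn ≠ finN n hn := fin1_ne_finN hn
  have hNo : finN n hn ≠ fin1 n hn := hoN.symm
  have hT1 : g (∑ s : Fin n, bas k n hn (l - 1) v hv j s (gen k (pw l v) s i.rev)) =
      g (bas k n hn (l - 1) v hv j i.rev 1) := by
    rw [map_sum, Finset.sum_congr rfl (fun s _ => by
      rw [g_bas hn ε (l - 1) g v hv j s, hε _ (pw_mem hv) s i.rev, ite_smul, one_smul,
        zero_smul])]
    rw [Finset.sum_ite_eq' Finset.univ i.rev (fun s => g (bas k n hn (l - 1) v hv j s 1)),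
      if_pos (Finset.mem_univ _)]
  have hT2 : g (bas k n hn (l - 1) (mD v) (V_mD hv) j.rev i ((-1 : Aq k n) ^ l)) =
      ((-1 : k) ^ l) • g (bas k n hn (l - 1) (mD v) (V_mD hv) j.rev i 1) := by
    rw [g_bas, eps_neg_one_pow]
  have hX : g (bas k n hn (l - 1) (mT v) (V_mT hv) (fin1 n hn) (fin1 n hn)
        (gen k (pw l (mT v)) i.rev (finN n hn))
      + (if l = 3 then
          ∑ s ∈ Finset.univ.filter (fun s : Fin n => s ≠ fin1 n hn ∧ s ≠ finN n hn),
            bas k n hn (l - 1) (mT v) (V_mT hv) s s (gen k (pw l (mT v)) i.rev (finN n hn))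
        else 0)) =
      if i = fin1 n hn then
        g (bas k n hn (l - 1) (mT v) (V_mT hv) (fin1 n hn) (fin1 n hn) 1)
          + SSm l hn (fun j i => g (bas k n hn (l - 1) (mT v) (V_mT hv) j i 1))
      else 0 := by
    rw [map_add, g_bas, hε _ (pw_mem (V_mT hv)) i.rev (finN n hn)]
    by_cases hio : i = fin1 n hn
    · subst hio
      rw [if_pos rfl, if_pos (rev_fin1 hn), one_smul]
      congr 1
      rw [apply_ite g, map_zero, map_sum]
      show (if l = 3 then _ else (0 : KE k n ε)) = SSm l hn _
      unfold SSm
      split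
      · refine Finset.sum_congr rfl (fun s _ => ?_)
        rw [g_bas hn ε (l - 1) g (mT v) (V_mT hv) s s,
          hε _ (pw_mem (V_mT hv)) (fin1 n hn).rev (finN n hn), if_pos (rev_fin1 hn), one_smul]
      · rfl
    · rw [if_neg hio, if_neg (fun h => hio ((rev_eq_finN_iff hn i).mp h)), zero_smul, zero_add]
      rw [apply_ite g, map_zero, map_sum]
      rw [Finset.sum_congr rfl (fun s _ => by
        rw [g_bas hn ε (l - 1) g (mT v) (V_mT hv) s s,
          hε _ (pw_mem (V_mT hv)) i.rev (finN n hn),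
          if_neg (fun h => hio ((rev_eq_finN_iff hn i).mp h)), zero_smul])]
      rw [Finset.sum_const_zero, ite_self]
  have hW : g (∑ s : Fin n, bas k n hn (l - 1) (mT v) (V_mT hv) (fin1 n hn) s
        (gen k (pw l (mT v)) s (finN n hn))
      + bas k n hn (l - 1) (mS v) (V_mS hv) (finN n hn) (fin1 n hn) ((-1 : Aq k n) ^ l)) =
      g (bas k n hn (l - 1) (mT v) (V_mT hv) (fin1 n hn) (finN n hn) 1)
        + ((-1 : k) ^ l) • g (bas k n hn (l - 1) (mS v) (V_mS hv) (finN n hn) (fin1 n hn) 1) := by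
    rw [map_add]
    congr 1
    · rw [map_sum, Finset.sum_congr rfl (fun s _ => by
        rw [g_bas hn ε (l - 1) g (mT v) (V_mT hv) (fin1 n hn) s,
          hε _ (pw_mem (V_mT hv)) s (finN n hn), ite_smul, one_smul, zero_smul])]
      rw [Finset.sum_ite_eq' Finset.univ (finN n hn)
        (fun s => g (bas k n hn (l - 1) (mT v) (V_mT hv) (fin1 n hn) s 1)),
        if_pos (Finset.mem_univ _)]
    · rw [g_bas, eps_neg_one_pow]
  have hT4 : g (if j = fin1 n hn ∧ i = finN n hn then
        bas k n hn (l - 1) (mS v) (V_mS hv) (fin1 n hn) (fin1 n hn) ((-1 : Aq k n) ^ l)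
          + (if l = 3 then
              ∑ s ∈ Finset.univ.filter (fun s : Fin n => s ≠ fin1 n hn ∧ s ≠ finN n hn),
                bas k n hn (l - 1) (mS v) (V_mS hv) s s ((-1 : Aq k n) ^ l)
            else 0)
      else 0) =
      if j = fin1 n hn ∧ i = finN n hn then
        ((-1 : k) ^ l) • (g (bas k n hn (l - 1) (mS v) (V_mS hv) (fin1 n hn) (fin1 n hn) 1)
          + SSm l hn (fun j i => g (bas k n hn (l - 1) (mS v) (V_mS hv) j i 1))) else 0 := by
    rw [apply_ite g, map_zero]
    by_cases hc : j = fin1 n hn ∧ i = finN n hn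
    · rw [if_pos hc, if_pos hc, map_add, g_bas, eps_neg_one_pow, smul_add]
      congr 1
      rw [apply_ite g, map_zero, map_sum]
      show (if l = 3 then _ else (0 : KE k n ε)) = _ • SSm l hn _
      unfold SSm
      split
      · rw [Finset.sum_congr rfl (fun s _ => by
          rw [g_bas hn ε (l - 1) g (mS v) (V_mS hv) s s, eps_neg_one_pow]), ← Finset.smul_sum]
      · rw [smul_zero]
    · rw [if_neg hc, if_neg hc]
  unfold dTail
  rw [map_add, map_add, map_add, hT1, hT2, hT4, add_sub_assoc]
  congr 1
  congr 1
  -- the third summand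
  by_cases hj : j = finN n hn
  · subst hj
    rw [if_pos rfl, map_sub g, hX]
    have hYite : g (if i = finN n hn then
          (∑ s : Fin n, bas k n hn (l - 1) (mT v) (V_mT hv) (fin1 n hn) s
              (gen k (pw l (mT v)) s (finN n hn))
            + bas k n hn (l - 1) (mS v) (V_mS hv) (finN n hn) (fin1 n hn) ((-1 : Aq k n) ^ l))
        else 0) =
        if i = finN n hn then
          g (bas k n hn (l - 1) (mT v) (V_mT hv) (fin1 n hn) (finN n hn) 1)
            + ((-1 : k) ^ l) • g (bas k n hn (l - 1) (mS v) (V_mS hv) (finN n hn) (fin1 n hn) 1)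
        else 0 := by
      rw [apply_ite g, map_zero, hW]
    rw [hYite]
    by_cases hio : i = fin1 n hn
    · subst hio
      rw [if_pos rfl, if_neg hoN,
        if_pos (show finN n hn = finN n hn ∧ fin1 n hn = fin1 n hn from ⟨rfl, rfl⟩),
        if_neg (show ¬(finN n hn = finN n hn ∧ fin1 n hn = finN n hn) from fun h => hoN h.2)]
    · by_cases hiN : i = finN n hn
      · subst hiN
        rw [if_neg hNo, if_pos rfl,
          if_neg (show ¬(finN n hn = finN n hn ∧ finN n hn = fin1 n hn) from fun h => hNo h.2),
          if_pos (show finN n hn = finN n hn ∧ finN n hn = finN n hn from ⟨rfl, rfl⟩)]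
      · rw [if_neg hio, if_neg hiN,
          if_neg (show ¬(finN n hn = finN n hn ∧ i = fin1 n hn) from fun h => hio h.2),
          if_neg (show ¬(finN n hn = finN n hn ∧ i = finN n hn) from fun h => hiN h.2)]
  · rw [if_neg hj, map_zero,
      if_neg (show ¬(j = finN n hn ∧ i = fin1 n hn) from fun h => hj h.1),
      if_neg (show ¬(j = finN n hn ∧ i = finN n hn) from fun h => hj h.1), sub_zero]
end Concrete16
section E4sec

variable {k : Type*} [Field k] {M : Type*} [AddCommGroup M] [Module k M] {n : ℕ}

/-- The conjunction of the four E-families. -/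
def E4 (l : ℕ) (hn : 2 ≤ n) (e : k) (a b c d : Fin n → Fin n → M) : Prop :=
  EP l hn e a b c d ∧ EP l hn e b a d c ∧ EP l hn e c d a b ∧ EP l hn e d c b a

end E4sec
theorem statement_16 (k : Type*) [Field k] (n : ℕ) (hn : 2 ≤ n)
    (ε : Aq k n →ₐ[k] k)
    (hε : ∀ v ∈ V n, ∀ j i : Fin n, ε (gen k v j i) = if j = i then 1 else 0)
    (l : ℕ) (hl : 3 ≤ l)
    (dl : Pmod k n hn l →ₗ[(Aq k n)ᵐᵒᵖ] Pmod k n hn (l - 1))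
    (hdl : ∀ (v : Mat n) (hv : v ∈ V n) (j i : Fin n),
      dl (bas k n hn l v hv j i 1) = dTail k n hn l v hv j i)
    (g : Pmod k n hn (l - 1) →ₗ[(Aq k n)ᵐᵒᵖ] KE k n ε) :
    (g.comp dl = 0 ↔ ∀ (v : Mat n) (hv : v ∈ V n), cond16 k hn ε l g v hv) ∧
      ∀ (v : Mat n) (hv : v ∈ V n), cond16 k hn ε l g v hv →
        ∀ (w : Mat n) (hw : w ∈ V n), cond16 k hn ε l g w hw := by

  have hu : uMat n ∈ V n := Set.mem_insert _ _
  have he2 : ∀ x : KE k n ε, ((-1 : k) ^ l) • ((-1 : k) ^ l) • x = x := fun x => by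
    rw [smul_smul, ← pow_add, Even.neg_one_pow ⟨l, rfl⟩, one_smul]
  have key : ∀ (v : Mat n) (hv : v ∈ V n), cond16 k hn ε l g v hv ↔
      E4 l hn ((-1 : k) ^ l)
        (fun j i => g (bas k n hn (l - 1) (uMat n) hu j i 1))
        (fun j i => g (bas k n hn (l - 1) (mT (uMat n)) (V_mT hu) j i 1))
        (fun j i => g (bas k n hn (l - 1) (mS (uMat n)) (V_mS hu) j i 1))
        (fun j i => g (bas k n hn (l - 1) (mD (uMat n)) (V_mD hu) j i 1)) := by
    intro v hv
    have hv' := hv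
    simp only [V, Set.mem_insert_iff, Set.mem_singleton_iff] at hv'
    rcases hv' with rfl | rfl | rfl | rfl
    · exact CP_iff_EPs l hn ((-1 : k) ^ l) he2
        (fun j i => g (bas k n hn (l - 1) (uMat n) hu j i 1))
        (fun j i => g (bas k n hn (l - 1) (mT (uMat n)) (V_mT hu) j i 1))
        (fun j i => g (bas k n hn (l - 1) (mS (uMat n)) (V_mS hu) j i 1))
        (fun j i => g (bas k n hn (l - 1) (mD (uMat n)) (V_mD hu) j i 1))
    · have H := CP_iff_EPs l hn ((-1 : k) ^ l) he2
        (fun j i => g (bas k n hn (l - 1) (mT (uMat n)) (V_mT hu) j i 1))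
        (fun j i => g (bas k n hn (l - 1) (uMat n) hu j i 1))
        (fun j i => g (bas k n hn (l - 1) (mD (uMat n)) (V_mD hu) j i 1))
        (fun j i => g (bas k n hn (l - 1) (mS (uMat n)) (V_mS hu) j i 1))
      exact ⟨fun h => (fun q => ⟨q.2.1, q.1, q.2.2.2, q.2.2.1⟩) (H.mp h),
        fun h => H.mpr ⟨h.2.1, h.1, h.2.2.2, h.2.2.1⟩⟩
    · have e3 : (fun j i => g (bas k n hn (l - 1) (mS (mS (uMat n)))
            (V_mS (V_mS hu)) j i 1)) =
          (fun j i => g (bas k n hn (l - 1) (uMat n) hu j i 1)) :=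
        bas_fun_congr hn ε (l - 1) g (mS_mS (uMat n)) _ hu
      have e4 : (fun j i => g (bas k n hn (l - 1) (mD (mS (uMat n)))
            (V_mD (V_mS hu)) j i 1)) =
          (fun j i => g (bas k n hn (l - 1) (mT (uMat n)) (V_mT hu) j i 1)) :=
        bas_fun_congr hn ε (l - 1) g (mD_mS (uMat n)) _ (V_mT hu)
      show CP l hn ((-1 : k) ^ l)
        (fun j i => g (bas k n hn (l - 1) (mS (uMat n)) (V_mS hu) j i 1))
        (fun j i => g (bas k n hn (l - 1) (mD (uMat n)) (V_mD hu) j i 1))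
        (fun j i => g (bas k n hn (l - 1) (mS (mS (uMat n))) (V_mS (V_mS hu)) j i 1))
        (fun j i => g (bas k n hn (l - 1) (mD (mS (uMat n))) (V_mD (V_mS hu)) j i 1)) ↔ _
      rw [e3, e4]
      have H := CP_iff_EPs l hn ((-1 : k) ^ l) he2
        (fun j i => g (bas k n hn (l - 1) (mS (uMat n)) (V_mS hu) j i 1))
        (fun j i => g (bas k n hn (l - 1) (mD (uMat n)) (V_mD hu) j i 1))
        (fun j i => g (bas k n hn (l - 1) (uMat n) hu j i 1))
        (fun j i => g (bas k n hn (l - 1) (mT (uMat n)) (V_mT hu) j i 1))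
      exact ⟨fun h => (fun q => ⟨q.2.2.1, q.2.2.2, q.1, q.2.1⟩) (H.mp h),
        fun h => H.mpr ⟨h.2.2.1, h.2.2.2, h.1, h.2.1⟩⟩
    · have e3 : (fun j i => g (bas k n hn (l - 1) (mS (mD (uMat n)))
            (V_mS (V_mD hu)) j i 1)) =
          (fun j i => g (bas k n hn (l - 1) (mT (uMat n)) (V_mT hu) j i 1)) :=
        bas_fun_congr hn ε (l - 1) g (mS_mD (uMat n)) _ (V_mT hu)
      have e4 : (fun j i => g (bas k n hn (l - 1) (mD (mD (uMat n)))
            (V_mD (V_mD hu)) j i 1)) =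
          (fun j i => g (bas k n hn (l - 1) (uMat n) hu j i 1)) :=
        bas_fun_congr hn ε (l - 1) g (mD_mD (uMat n)) _ hu
      show CP l hn ((-1 : k) ^ l)
        (fun j i => g (bas k n hn (l - 1) (mD (uMat n)) (V_mD hu) j i 1))
        (fun j i => g (bas k n hn (l - 1) (mS (uMat n)) (V_mS hu) j i 1))
        (fun j i => g (bas k n hn (l - 1) (mS (mD (uMat n))) (V_mS (V_mD hu)) j i 1))
        (fun j i => g (bas k n hn (l - 1) (mD (mD (uMat n))) (V_mD (V_mD hu)) j i 1)) ↔ _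
      rw [e3, e4]
      have H := CP_iff_EPs l hn ((-1 : k) ^ l) he2
        (fun j i => g (bas k n hn (l - 1) (mD (uMat n)) (V_mD hu) j i 1))
        (fun j i => g (bas k n hn (l - 1) (mS (uMat n)) (V_mS hu) j i 1))
        (fun j i => g (bas k n hn (l - 1) (mT (uMat n)) (V_mT hu) j i 1))
        (fun j i => g (bas k n hn (l - 1) (uMat n) hu j i 1))
      exact ⟨fun h => (fun q => ⟨q.2.2.2, q.2.2.1, q.2.1, q.1⟩) (H.mp h),
        fun h => H.mpr ⟨h.2.2.2, h.2.2.1, h.2.1, h.1⟩⟩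
  have hEtuple : g.comp dl = 0 ↔ E4 l hn ((-1 : k) ^ l)
      (fun j i => g (bas k n hn (l - 1) (uMat n) hu j i 1))
      (fun j i => g (bas k n hn (l - 1) (mT (uMat n)) (V_mT hu) j i 1))
      (fun j i => g (bas k n hn (l - 1) (mS (uMat n)) (V_mS hu) j i 1))
      (fun j i => g (bas k n hn (l - 1) (mD (uMat n)) (V_mD hu) j i 1)) := by
    rw [comp_eq_zero_iff hn ε l dl hdl g]
    constructor
    · intro h
      have mk : ∀ (v : Mat n) (hv : v ∈ V n), DP l hn ((-1 : k) ^ l)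
          (fun j i => g (bas k n hn (l - 1) v hv j i 1))
          (fun j i => g (bas k n hn (l - 1) (mT v) (V_mT hv) j i 1))
          (fun j i => g (bas k n hn (l - 1) (mS v) (V_mS hv) j i 1))
          (fun j i => g (bas k n hn (l - 1) (mD v) (V_mD hv) j i 1)) := by
        intro v hv j i
        have hthis := h v hv j i
        rw [g_dTail hn ε hε l g v hv j i] at hthis
        exact hthis
      refine ⟨?_, ?_, ?_, ?_⟩
      · exact (DP_iff_EP l hn ((-1 : k) ^ l) _ _ _ _).mp (mk (uMat n) hu)
      · exact (DP_iff_EP l hn ((-1 : k) ^ l) _ _ _ _).mp (mk (mT (uMat n)) (V_mT hu))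
      · have H := mk (mS (uMat n)) (V_mS hu)
        rw [bas_fun_congr hn ε (l - 1) g (mS_mS (uMat n)) (V_mS (V_mS hu)) hu,
          bas_fun_congr hn ε (l - 1) g (mD_mS (uMat n)) (V_mD (V_mS hu)) (V_mT hu)] at H
        exact (DP_iff_EP l hn ((-1 : k) ^ l) _ _ _ _).mp H
      · have H := mk (mD (uMat n)) (V_mD hu)
        rw [bas_fun_congr hn ε (l - 1) g (mS_mD (uMat n)) (V_mS (V_mD hu)) (V_mT hu),
          bas_fun_congr hn ε (l - 1) g (mD_mD (uMat n)) (V_mD (V_mD hu)) hu] at H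
        exact (DP_iff_EP l hn ((-1 : k) ^ l) _ _ _ _).mp H
    · intro hE4 v hv j i
      rw [g_dTail hn ε hε l g v hv j i]
      have hv' := hv
      simp only [V, Set.mem_insert_iff, Set.mem_singleton_iff] at hv'
      rcases hv' with rfl | rfl | rfl | rfl
      · exact (DP_iff_EP l hn ((-1 : k) ^ l) _ _ _ _).mpr hE4.1 j i
      · exact (DP_iff_EP l hn ((-1 : k) ^ l) _ _ _ _).mpr hE4.2.1 j i
      · have H := (DP_iff_EP l hn ((-1 : k) ^ l)
            (fun j i => g (bas k n hn (l - 1) (mS (uMat n)) (V_mS hu) j i 1))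
            (fun j i => g (bas k n hn (l - 1) (mD (uMat n)) (V_mD hu) j i 1))
            (fun j i => g (bas k n hn (l - 1) (uMat n) hu j i 1))
            (fun j i => g (bas k n hn (l - 1) (mT (uMat n)) (V_mT hu) j i 1))).mpr hE4.2.2.1
        rw [← bas_fun_congr hn ε (l - 1) g (mS_mS (uMat n)) (V_mS (V_mS hu)) hu,
          ← bas_fun_congr hn ε (l - 1) g (mD_mS (uMat n)) (V_mD (V_mS hu)) (V_mT hu)] at H
        exact H j i
      · have H := (DP_iff_EP l hn ((-1 : k) ^ l)
            (fun j i => g (bas k n hn (l - 1) (mD (uMat n)) (V_mD hu) j i 1))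
            (fun j i => g (bas k n hn (l - 1) (mS (uMat n)) (V_mS hu) j i 1))
            (fun j i => g (bas k n hn (l - 1) (mT (uMat n)) (V_mT hu) j i 1))
            (fun j i => g (bas k n hn (l - 1) (uMat n) hu j i 1))).mpr hE4.2.2.2
        rw [← bas_fun_congr hn ε (l - 1) g (mS_mD (uMat n)) (V_mS (V_mD hu)) (V_mT hu),
          ← bas_fun_congr hn ε (l - 1) g (mD_mD (uMat n)) (V_mD (V_mD hu)) hu] at H
        exact H j i
  refine ⟨?_, ?_⟩
  · exact ⟨fun h v hv => (key v hv).mpr (hEtuple.mp h),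
      fun h => hEtuple.mpr ((key (uMat n) hu).mp (h (uMat n) hu))⟩
  · exact fun v hv hc w hw => (key w hw).mpr ((key v hv).mp hc)

end UnPlusAnick
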